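/- Let β ∈ ℝ with β ≠ 1. There exists C > 0, depending only on β, such that for all 0 < Z̃ < Z < ∞ and all continuously differentiable u : [Z̃,Z] → ℝ, writing D̂u(z) := (z^{2/3}u(z))' and ∂̂u(z) := z^{2/3}u'(z): (a) if β < 1, then ∫_{Z̃}^Z u² z^{β−2/3} dz + Z^{β+1/3} u(Z)² ≤ C ( Z̃^{β+1/3} u(Z̃)² + ∫_{Z̃}^Z (D̂u)² z^β dz ); (b) if β > 1, then ∫_{Z̃}^Z u² z^{β−2/3} dz + Z̃^{β+1/3} u(Z̃)² ≤ C ( Z^{β+1/3} u(Z)² + ∫_{Z̃}^Z (D̂u)² z^β dz ); (c) if β < 1, then ∫_{Z̃}^Z u² z^{β−2} dz + Z^{β−1} u(Z)² ≤ C ( Z̃^{β−1} u(Z̃)² + ∫_{Z̃}^Z (∂̂u)² z^{β−4/3} dz ); (d) if β > 1, then ∫_{Z̃}^Z u² z^{β−2} dz + Z̃^{β−1} u(Z̃)² ≤ C ( Z^{β−1} u(Z)² + ∫_{Z̃}^Z (∂̂u)² z^{β−4/3} dz ). -/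

import Mathlib

open Set MeasureTheory intervalIntegral

lemma hardy_key (β Zt Z : ℝ) (h0 : 0 < Zt) (hZ : Zt ≤ Z)
    (w g : ℝ → ℝ) (hw : ContinuousOn w (Icc Zt Z)) (hg : ContinuousOn g (Icc Zt Z))
    (hd : ∀ z ∈ Ioo Zt Z, HasDerivAt w (g z) z) :
    Z ^ (β-1) * (w Z)^2 - Zt ^ (β-1) * (w Zt)^2 =
      (∫ z in Zt..Z, 2 * w z * g z * z ^ (β-1)) +
        (β-1) * ∫ z in Zt..Z, (w z)^2 * z ^ (β-2) := by
  have hzp : ∀ p : ℝ, ContinuousOn (fun z : ℝ => z ^ p) (Icc Zt Z) := fun p z hz =>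
    (Real.continuousAt_rpow_const z p (Or.inl (h0.trans_le hz.1).ne')).continuousWithinAt
  have hint1 : IntervalIntegrable (fun z => 2 * w z * g z * z ^ (β-1)) volume Zt Z := by
    apply ContinuousOn.intervalIntegrable
    rw [uIcc_of_le hZ]
    exact (((continuousOn_const.mul hw).mul hg).mul (hzp _))
  have hint2 : IntervalIntegrable (fun z => (w z)^2 * z ^ (β-2)) volume Zt Z := by
    apply ContinuousOn.intervalIntegrable
    rw [uIcc_of_le hZ]
    exact (hw.pow 2).mul (hzp _)
  have hftc : (∫ z in Zt..Z, (2 * w z * g z * z ^ (β-1) + (β-1) * ((w z)^2 * z ^ (β-2)))) =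
      Z ^ (β-1) * (w Z)^2 - Zt ^ (β-1) * (w Zt)^2 := by
    have := intervalIntegral.integral_eq_sub_of_hasDerivAt_of_le hZ
      (f := fun z => (w z)^2 * z ^ (β-1))
      (f' := fun z => 2 * w z * g z * z ^ (β-1) + (β-1) * ((w z)^2 * z ^ (β-2)))
      ((hw.pow 2).mul (hzp _))
      (fun z hz => by
        have hz0 : (0:ℝ) < z := h0.trans hz.1
        have h1 : HasDerivAt (fun z : ℝ => (w z)^2) (2 * w z * g z) z := by
          have := (hd z hz).pow 2
          refine this.congr_deriv ?_
          ring
        have h2 : HasDerivAt (fun z : ℝ => z ^ (β-1)) ((β-1) * z ^ (β-1-1)) z :=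
          Real.hasDerivAt_rpow_const (Or.inl hz0.ne')
        have := h1.mul h2
        refine this.congr_deriv ?_
        have : β - 1 - 1 = β - 2 := by ring
        rw [this]; ring)
      (by
        apply (hint1.add (hint2.const_mul (β-1))).congr
        · exact fun x _ => rfl)
    rw [this]; ring
  rw [intervalIntegral.integral_add hint1 (hint2.const_mul (β-1))] at hftc
  rw [intervalIntegral.integral_const_mul] at hftc
  linarith [hftc]

lemma hardy_cross (β Zt Z ε : ℝ) (h0 : 0 < Zt) (hZ : Zt ≤ Z) (hε : 0 < ε)
    (w g : ℝ → ℝ) (hw : ContinuousOn w (Icc Zt Z)) (hg : ContinuousOn g (Icc Zt Z)) :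
    |∫ z in Zt..Z, 2 * w z * g z * z ^ (β-1)| ≤
      ε * (∫ z in Zt..Z, (w z)^2 * z ^ (β-2)) + ε⁻¹ * (∫ z in Zt..Z, (g z)^2 * z ^ β) := by
  have hzp : ∀ p : ℝ, ContinuousOn (fun z : ℝ => z ^ p) (Icc Zt Z) := fun p z hz =>
    (Real.continuousAt_rpow_const z p (Or.inl (h0.trans_le hz.1).ne')).continuousWithinAt
  have hint1 : IntervalIntegrable (fun z => 2 * w z * g z * z ^ (β-1)) volume Zt Z := by
    apply ContinuousOn.intervalIntegrable; rw [uIcc_of_le hZ]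
    exact (((continuousOn_const.mul hw).mul hg).mul (hzp _))
  have hint2 : IntervalIntegrable (fun z => (w z)^2 * z ^ (β-2)) volume Zt Z := by
    apply ContinuousOn.intervalIntegrable; rw [uIcc_of_le hZ]
    exact (hw.pow 2).mul (hzp _)
  have hint3 : IntervalIntegrable (fun z => (g z)^2 * z ^ β) volume Zt Z := by
    apply ContinuousOn.intervalIntegrable; rw [uIcc_of_le hZ]
    exact (hg.pow 2).mul (hzp _)
  have hpt : ∀ z ∈ Icc Zt Z, |2 * w z * g z * z ^ (β-1)| ≤
      ε * ((w z)^2 * z ^ (β-2)) + ε⁻¹ * ((g z)^2 * z ^ β) := by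
    intro z hz
    have hz0 : (0:ℝ) < z := h0.trans_le hz.1
    set a := w z * z ^ ((β-2)/2) with ha
    set b := g z * z ^ (β/2) with hb
    have h1 : z ^ ((β-2)/2) * z ^ ((β-2)/2) = z ^ (β-2) := by
      rw [← Real.rpow_add hz0]; norm_num
    have h2 : z ^ (β/2) * z ^ (β/2) = z ^ β := by
      rw [← Real.rpow_add hz0]; norm_num
    have h3 : z ^ ((β-2)/2) * z ^ (β/2) = z ^ (β-1) := by
      rw [← Real.rpow_add hz0]; ring_nf
    have e1 : 2 * w z * g z * z ^ (β-1) = 2 * a * b := by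
      rw [ha, hb]; rw [← h3]; ring
    have e2 : (w z)^2 * z ^ (β-2) = a^2 := by rw [ha, ← h1]; ring
    have e3 : (g z)^2 * z ^ β = b^2 := by rw [hb, ← h2]; ring
    rw [e1, e2, e3, abs_le]
    constructor <;> nlinarith [sq_nonneg (ε*a - b), sq_nonneg (ε*a + b),
      mul_inv_cancel₀ hε.ne', inv_pos.mpr hε, mul_pos hε (inv_pos.mpr hε)]
  have hId : (∫ z in Zt..Z, (ε * ((w z)^2 * z ^ (β-2)) + ε⁻¹ * ((g z)^2 * z ^ β))) =
      ε * (∫ z in Zt..Z, (w z)^2 * z ^ (β-2)) + ε⁻¹ * (∫ z in Zt..Z, (g z)^2 * z ^ β) := by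
    rw [intervalIntegral.integral_add (hint2.const_mul ε) (hint3.const_mul ε⁻¹),
      intervalIntegral.integral_const_mul, intervalIntegral.integral_const_mul]
  rw [abs_le, ← hId]
  constructor
  · rw [← intervalIntegral.integral_neg]
    apply intervalIntegral.integral_mono_on hZ
      ((hint2.const_mul ε).add (hint3.const_mul ε⁻¹)).neg hint1
    intro z hz
    have := (abs_le.mp (hpt z hz)).1
    simp only [Pi.neg_apply]
    linarith
  · apply intervalIntegral.integral_mono_on hZ hint1
      ((hint2.const_mul ε).add (hint3.const_mul ε⁻¹))
    intro z hz
    exact (abs_le.mp (hpt z hz)).2.trans_eq rfl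

lemma hardy_nonneg (β p Zt Z : ℝ) (h0 : 0 < Zt) (hZ : Zt ≤ Z) (w : ℝ → ℝ) :
    0 ≤ ∫ z in Zt..Z, (w z)^2 * z ^ p := by
  apply intervalIntegral.integral_nonneg hZ
  intro z hz
  exact mul_nonneg (sq_nonneg _) (Real.rpow_nonneg (h0.trans_le hz.1).le _)

lemma hardy_core_lt (β Zt Z : ℝ) (hβ : β < 1) (h0 : 0 < Zt) (hZ : Zt ≤ Z)
    (w g : ℝ → ℝ) (hw : ContinuousOn w (Icc Zt Z)) (hg : ContinuousOn g (Icc Zt Z))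
    (hd : ∀ z ∈ Ioo Zt Z, HasDerivAt w (g z) z) :
    (∫ z in Zt..Z, (w z)^2 * z ^ (β-2)) + Z ^ (β-1) * (w Z)^2 ≤
      (max 1 (2/|1-β|))^2 * (Zt ^ (β-1) * (w Zt)^2 + ∫ z in Zt..Z, (g z)^2 * z ^ β) := by
  set A := ∫ z in Zt..Z, (w z)^2 * z ^ (β-2) with hA
  set E := ∫ z in Zt..Z, (g z)^2 * z ^ β with hE
  set B := Z ^ (β-1) * (w Z)^2 with hB
  set D := Zt ^ (β-1) * (w Zt)^2 with hD
  set I := ∫ z in Zt..Z, 2 * w z * g z * z ^ (β-1) with hI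
  have hc : (0:ℝ) < (1-β)/2 := by linarith
  have habs : |1-β| = 1-β := abs_of_pos (by linarith)
  have hkey : B - D = I + (β-1) * A := hardy_key β Zt Z h0 hZ w g hw hg hd
  have hcross := hardy_cross β Zt Z ((1-β)/2) h0 hZ hc w g hw hg
  rw [abs_le] at hcross
  have hinv : ((1-β)/2)⁻¹ = 2/(1-β) := by rw [inv_div]
  have hA0 : 0 ≤ A := hardy_nonneg β _ Zt Z h0 hZ w
  have hE0 : 0 ≤ E := hardy_nonneg β _ Zt Z h0 hZ g
  have hB0 : 0 ≤ B := mul_nonneg (Real.rpow_nonneg (h0.trans_le hZ).le _) (sq_nonneg _)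
  have hD0 : 0 ≤ D := mul_nonneg (Real.rpow_nonneg h0.le _) (sq_nonneg _)
  set M := max 1 (2/|1-β|) with hM
  have hM1 : (1:ℝ) ≤ M := le_max_left _ _
  have hM2 : 2/(1-β) ≤ M := habs ▸ le_max_right _ _
  -- from hkey and hcross.2 : (1-β)*A + B ≤ D + ((1-β)/2)*A + (2/(1-β))*E
  have main : ((1-β)/2) * A + B ≤ D + (2/(1-β)) * E := by
    have h2 := hcross.2
    rw [hinv] at h2
    nlinarith [h2, hkey]
  -- conclude A + B ≤ M^2 * (D + E)
  have hM0 : (0:ℝ) ≤ M := le_trans zero_le_one hM1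
  have hMc : 1 ≤ M * ((1-β)/2) := by
    have h1 : (2/(1-β)) * ((1-β)/2) = 1 := by
      rw [div_mul_div_comm, mul_comm ((1:ℝ)-β) 2]
      exact div_self (by nlinarith : (0:ℝ) < 2*(1-β)).ne'
    calc (1:ℝ) = (2/(1-β)) * ((1-β)/2) := h1.symm
    _ ≤ M * ((1-β)/2) := mul_le_mul_of_nonneg_right hM2 hc.le
  calc A + B ≤ M * ((1-β)/2 * A + B) := by nlinarith [mul_le_mul_of_nonneg_right hMc hA0, mul_le_mul_of_nonneg_right hM1 hB0]
  _ ≤ M * (D + 2/(1-β) * E) := mul_le_mul_of_nonneg_left main hM0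
  _ ≤ M * (M * D + M * E) := by
      apply mul_le_mul_of_nonneg_left _ hM0
      have e1 : D ≤ M * D := by nlinarith [mul_le_mul_of_nonneg_right hM1 hD0]
      have e2 : 2/(1-β) * E ≤ M * E := mul_le_mul_of_nonneg_right hM2 hE0
      linarith
  _ = M^2 * (D + E) := by ring

lemma hardy_core_gt (β Zt Z : ℝ) (hβ : 1 < β) (h0 : 0 < Zt) (hZ : Zt ≤ Z)
    (w g : ℝ → ℝ) (hw : ContinuousOn w (Icc Zt Z)) (hg : ContinuousOn g (Icc Zt Z))
    (hd : ∀ z ∈ Ioo Zt Z, HasDerivAt w (g z) z) :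
    (∫ z in Zt..Z, (w z)^2 * z ^ (β-2)) + Zt ^ (β-1) * (w Zt)^2 ≤
      (max 1 (2/|1-β|))^2 * (Z ^ (β-1) * (w Z)^2 + ∫ z in Zt..Z, (g z)^2 * z ^ β) := by
  set A := ∫ z in Zt..Z, (w z)^2 * z ^ (β-2) with hA
  set E := ∫ z in Zt..Z, (g z)^2 * z ^ β with hE
  set B := Z ^ (β-1) * (w Z)^2 with hB
  set D := Zt ^ (β-1) * (w Zt)^2 with hD
  set I := ∫ z in Zt..Z, 2 * w z * g z * z ^ (β-1) with hI
  have hc : (0:ℝ) < (β-1)/2 := by linarith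
  have habs : |1-β| = β-1 := by rw [abs_of_neg (by linarith)]; ring
  have hkey : B - D = I + (β-1) * A := hardy_key β Zt Z h0 hZ w g hw hg hd
  have hcross := hardy_cross β Zt Z ((β-1)/2) h0 hZ hc w g hw hg
  rw [abs_le] at hcross
  have hinv : ((β-1)/2)⁻¹ = 2/(β-1) := by rw [inv_div]
  have hA0 : 0 ≤ A := hardy_nonneg β _ Zt Z h0 hZ w
  have hE0 : 0 ≤ E := hardy_nonneg β _ Zt Z h0 hZ g
  have hB0 : 0 ≤ B := mul_nonneg (Real.rpow_nonneg (h0.trans_le hZ).le _) (sq_nonneg _)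
  have hD0 : 0 ≤ D := mul_nonneg (Real.rpow_nonneg h0.le _) (sq_nonneg _)
  set M := max 1 (2/|1-β|) with hM
  have hM1 : (1:ℝ) ≤ M := le_max_left _ _
  have hM2 : 2/(β-1) ≤ M := habs ▸ le_max_right _ _
  have main : ((β-1)/2) * A + D ≤ B + (2/(β-1)) * E := by
    have h1 := hcross.1
    rw [hinv] at h1
    nlinarith [h1, hkey]
  have hM0 : (0:ℝ) ≤ M := le_trans zero_le_one hM1
  have hMc : 1 ≤ M * ((β-1)/2) := by
    have h1 : (2/(β-1)) * ((β-1)/2) = 1 := by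
      rw [div_mul_div_comm, mul_comm (β-(1:ℝ)) 2]
      exact div_self (by nlinarith : (0:ℝ) < 2*(β-1)).ne'
    calc (1:ℝ) = (2/(β-1)) * ((β-1)/2) := h1.symm
    _ ≤ M * ((β-1)/2) := mul_le_mul_of_nonneg_right hM2 hc.le
  calc A + D ≤ M * ((β-1)/2 * A + D) := by nlinarith [mul_le_mul_of_nonneg_right hMc hA0, mul_le_mul_of_nonneg_right hM1 hD0]
  _ ≤ M * (B + 2/(β-1) * E) := mul_le_mul_of_nonneg_left main hM0
  _ ≤ M * (M * B + M * E) := by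
      apply mul_le_mul_of_nonneg_left _ hM0
      have e1 : B ≤ M * B := by nlinarith [mul_le_mul_of_nonneg_right hM1 hB0]
      have e2 : 2/(β-1) * E ≤ M * E := mul_le_mul_of_nonneg_right hM2 hE0
      linarith
  _ = M^2 * (B + E) := by ring


/-- Weighted Hardy-type inequalities on an interval for the operators
`D̂u(z) = (z^{2/3}u)'` and `∂̂u(z) = z^{2/3}u'`. -/
theorem hardy_interval (β : ℝ) (hβ : β ≠ 1) :
    ∃ C > (0:ℝ), ∀ Zt Z : ℝ, 0 < Zt → Zt < Z →
      ∀ u : ℝ → ℝ, ContDiffOn ℝ 1 u (Set.Icc Zt Z) →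
        ((β < 1 →
          (∫ z in Zt..Z, (u z) ^ 2 * z ^ (β - 2/3)) + Z ^ (β + 1/3) * (u Z) ^ 2 ≤
            C * (Zt ^ (β + 1/3) * (u Zt) ^ 2 +
              ∫ z in Zt..Z, (deriv (fun x => x ^ ((2:ℝ)/3) * u x) z) ^ 2 * z ^ β)) ∧
         (1 < β →
          (∫ z in Zt..Z, (u z) ^ 2 * z ^ (β - 2/3)) + Zt ^ (β + 1/3) * (u Zt) ^ 2 ≤
            C * (Z ^ (β + 1/3) * (u Z) ^ 2 +
              ∫ z in Zt..Z, (deriv (fun x => x ^ ((2:ℝ)/3) * u x) z) ^ 2 * z ^ β)) ∧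
         (β < 1 →
          (∫ z in Zt..Z, (u z) ^ 2 * z ^ (β - 2)) + Z ^ (β - 1) * (u Z) ^ 2 ≤
            C * (Zt ^ (β - 1) * (u Zt) ^ 2 +
              ∫ z in Zt..Z, (z ^ ((2:ℝ)/3) * deriv u z) ^ 2 * z ^ (β - 4/3))) ∧
         (1 < β →
          (∫ z in Zt..Z, (u z) ^ 2 * z ^ (β - 2)) + Zt ^ (β - 1) * (u Zt) ^ 2 ≤
            C * (Z ^ (β - 1) * (u Z) ^ 2 +
              ∫ z in Zt..Z, (z ^ ((2:ℝ)/3) * deriv u z) ^ 2 * z ^ (β - 4/3)))) := by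
  refine ⟨(max 1 (2/|1-β|))^2, by positivity, ?_⟩
  intro Zt Z h0 hZlt u hu
  have hZ : Zt ≤ Z := hZlt.le
  have hud : UniqueDiffOn ℝ (Icc Zt Z) := uniqueDiffOn_Icc hZlt
  have hIoo : ∀ f h : ℝ → ℝ, (∀ z ∈ Ioo Zt Z, f z = h z) →
      (∫ z in Zt..Z, f z) = ∫ z in Zt..Z, h z := by
    intro f h hfh
    rw [intervalIntegral.integral_of_le hZ, intervalIntegral.integral_of_le hZ,
      MeasureTheory.integral_Ioc_eq_integral_Ioo, MeasureTheory.integral_Ioc_eq_integral_Ioo]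
    exact MeasureTheory.setIntegral_congr_fun measurableSet_Ioo (fun z hz => hfh z hz)
  -- data for u
  set gu := derivWithin u (Icc Zt Z) with hgu
  have hwu : ContinuousOn u (Icc Zt Z) := hu.continuousOn
  have hgu_cont : ContinuousOn gu (Icc Zt Z) := hu.continuousOn_derivWithin hud le_rfl
  have hdu : ∀ z ∈ Ioo Zt Z, HasDerivAt u (gu z) z := by
    intro z hz
    have hmem : Icc Zt Z ∈ nhds z := Icc_mem_nhds hz.1 hz.2
    have hdiff : DifferentiableAt ℝ u z :=
      ((hu.differentiableOn one_ne_zero) z (Ioo_subset_Icc_self hz)).differentiableAt hmem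
    have : gu z = deriv u z := derivWithin_of_mem_nhds hmem
    rw [this]
    exact hdiff.hasDerivAt
  -- data for v = z^{2/3} u
  set v : ℝ → ℝ := fun x => x ^ ((2:ℝ)/3) * u x with hv
  have hvC : ContDiffOn ℝ 1 v (Icc Zt Z) := by
    apply ContDiffOn.mul _ hu
    intro x hx
    exact (Real.contDiffAt_rpow_const_of_ne (h0.trans_le hx.1).ne').contDiffWithinAt
  set gv := derivWithin v (Icc Zt Z) with hgv
  have hwv : ContinuousOn v (Icc Zt Z) := hvC.continuousOn
  have hgv_cont : ContinuousOn gv (Icc Zt Z) := hvC.continuousOn_derivWithin hud le_rfl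
  have hdv : ∀ z ∈ Ioo Zt Z, HasDerivAt v (gv z) z := by
    intro z hz
    have hmem : Icc Zt Z ∈ nhds z := Icc_mem_nhds hz.1 hz.2
    have hdiff : DifferentiableAt ℝ v z :=
      ((hvC.differentiableOn one_ne_zero) z (Ioo_subset_Icc_self hz)).differentiableAt hmem
    have : gv z = deriv v z := derivWithin_of_mem_nhds hmem
    rw [this]
    exact hdiff.hasDerivAt
  -- conversions
  have hbd : ∀ z : ℝ, 0 < z → z ^ (β-1) * (v z)^2 = z ^ (β + 1/3) * (u z)^2 := by
    intro z hz
    have : z ^ (β-1) * (v z)^2 = (z ^ (β-1) * (z ^ ((2:ℝ)/3) * z ^ ((2:ℝ)/3))) * (u z)^2 := by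
      rw [hv]; ring
    rw [this, ← Real.rpow_add hz, ← Real.rpow_add hz,
      show β - 1 + ((2:ℝ)/3 + 2/3) = β + 1/3 by ring]
  have h1 : (∫ z in Zt..Z, (u z) ^ 2 * z ^ (β - 2/3)) =
      ∫ z in Zt..Z, (v z)^2 * z ^ (β-2) := by
    apply hIoo
    intro z hz
    have hz0 : (0:ℝ) < z := h0.trans hz.1
    have : (v z)^2 * z ^ (β-2) = (u z)^2 * ((z ^ ((2:ℝ)/3) * z ^ ((2:ℝ)/3)) * z ^ (β-2)) := by
      rw [hv]; ring
    rw [this, ← Real.rpow_add hz0, ← Real.rpow_add hz0,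
      show (2:ℝ)/3 + 2/3 + (β - 2) = β - 2/3 by ring]
  have h4 : (∫ z in Zt..Z, (deriv (fun x => x ^ ((2:ℝ)/3) * u x) z) ^ 2 * z ^ β) =
      ∫ z in Zt..Z, (gv z)^2 * z ^ β := by
    apply hIoo
    intro z hz
    have hmem : Icc Zt Z ∈ nhds z := Icc_mem_nhds hz.1 hz.2
    rw [hgv, derivWithin_of_mem_nhds hmem, hv]
  have h5 : (∫ z in Zt..Z, (z ^ ((2:ℝ)/3) * deriv u z) ^ 2 * z ^ (β - 4/3)) =
      ∫ z in Zt..Z, (gu z)^2 * z ^ β := by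
    apply hIoo
    intro z hz
    have hz0 : (0:ℝ) < z := h0.trans hz.1
    have hmem : Icc Zt Z ∈ nhds z := Icc_mem_nhds hz.1 hz.2
    rw [hgu, derivWithin_of_mem_nhds hmem]
    have : (z ^ ((2:ℝ)/3) * deriv u z) ^ 2 * z ^ (β - 4/3) =
        (deriv u z)^2 * ((z ^ ((2:ℝ)/3) * z ^ ((2:ℝ)/3)) * z ^ (β - 4/3)) := by ring
    rw [this, ← Real.rpow_add hz0, ← Real.rpow_add hz0,
      show (2:ℝ)/3 + 2/3 + (β - 4/3) = β by ring]
  refine ⟨?_, ?_, ?_, ?_⟩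
  · intro hβ1
    rw [h1, h4, ← hbd Z (h0.trans hZlt), ← hbd Zt h0]
    exact hardy_core_lt β Zt Z hβ1 h0 hZ v gv hwv hgv_cont hdv
  · intro hβ1
    rw [h1, h4, ← hbd Z (h0.trans hZlt), ← hbd Zt h0]
    exact hardy_core_gt β Zt Z hβ1 h0 hZ v gv hwv hgv_cont hdv
  · intro hβ1
    rw [h5]
    exact hardy_core_lt β Zt Z hβ1 h0 hZ u gu hwu hgu_cont hdu
  · intro hβ1
    rw [h5]
    exact hardy_core_gt β Zt Z hβ1 h0 hZ u gu hwu hgu_cont hdu
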